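/- Let p > q > 0 be coprime integers, let r₀, …, r_k be integers with rᵢ ≤ −2 for all i such that [r₀, …, r_k]⁻ = −p/q, and let p′, q′ be the unique integers with p q′ − q p′ = 1, 0 < p′ < p and 0 < q′ ≤ q. Then the value [r₀, …, r_{k−1}, r_k + 1]⁻ is well defined and equals −p′/q′. -/

import Mathlib

/-- Negative continued fraction value `[r₀, …, r_k]⁻`:
`[r_k]⁻ = r_k` and `[r_j, …, r_k]⁻ = r_j − 1/[r_{j+1}, …, r_k]⁻`. -/
def ncf : List ℤ → ℚ
  | [] => 0
  | [r] => (r : ℚ)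
  | r :: rest => (r : ℚ) - 1 / ncf rest

/-- Well-definedness of the negative continued fraction: no tail value
`[r_j, …, r_k]⁻` with `j ≥ 1` is zero (so no division by zero occurs). -/
def NcfWF : List ℤ → Prop
  | [] => True
  | [_] => True
  | _ :: rest => ncf rest ≠ 0 ∧ NcfWF rest

/-- `(p′, q′)` is the Bezout successor of `(p, q)`:
`p q′ − q p′ = 1`, `0 < p′ < p`, `0 < q′ ≤ q`. -/
def BezoutNext (p q p' q' : ℤ) : Prop :=
  p * q' - q * p' = 1 ∧ 0 < p' ∧ p' < p ∧ 0 < q' ∧ q' ≤ q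

/-- If `[r₀, …, r_k]⁻ = −p/q` with all `rᵢ ≤ −2`, and `p′, q′` are the unique
integers with `p q′ − q p′ = 1`, `0 < p′ < p`, `0 < q′ ≤ q`, then
`[r₀, …, r_{k−1}, r_k + 1]⁻` is well defined and equals `−p′/q′`. -/
lemma ncf_cons (r : ℤ) (L : List ℤ) (h : L ≠ []) :
    ncf (r :: L) = (r : ℚ) - 1 / ncf L := by
  match L with
  | [] => exact absurd rfl h
  | s :: t => rfl

lemma ncf_lt_neg_one : ∀ (l : List ℤ), l ≠ [] → (∀ r ∈ l, r ≤ -2) → ncf l < -1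
  | [r], _, h => by
      have hr := h r (by simp)
      show ((r : ℤ) : ℚ) < -1
      have : ((r : ℤ) : ℚ) ≤ -2 := by exact_mod_cast hr
      linarith
  | r :: s :: t, _, h => by
      have ih := ncf_lt_neg_one (s :: t) (by simp)
        (fun x hx => h x (List.mem_cons_of_mem _ hx))
      have hr : r ≤ -2 := h r (by simp)
      have hx0 : ncf (s :: t) < 0 := by linarith
      have h1 : -1 < 1 / ncf (s :: t) := by
        rw [lt_div_iff_of_neg hx0]; linarith
      rw [ncf_cons r (s :: t) (by simp)]
      have : ((r : ℤ) : ℚ) ≤ -2 := by exact_mod_cast hr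
      linarith

lemma ncf_wf_le : ∀ (l : List ℤ) (hne : l ≠ []),
    (∀ r ∈ l.dropLast, r ≤ -2) → l.getLast hne ≤ -1 → ncf l ≤ -1 ∧ NcfWF l
  | [r], _, _, hlast => by
      constructor
      · show ((r : ℤ) : ℚ) ≤ -1
        exact_mod_cast hlast
      · trivial
  | r :: s :: t, _, h, hlast => by
      have ih := ncf_wf_le (s :: t) (by simp)
        (fun x hx => h x (by simpa using Or.inr hx)) (by
          rwa [List.getLast_cons (by simp : (s :: t : List ℤ) ≠ [])] at hlast)
      have hr : r ≤ -2 := h r (by simp)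
      have hx : ncf (s :: t) ≤ -1 := ih.1
      have hx0 : ncf (s :: t) < 0 := by linarith
      have h1 : -1 ≤ 1 / ncf (s :: t) := by
        rw [le_div_iff_of_neg hx0]; linarith
      constructor
      · rw [ncf_cons r (s :: t) (by simp)]
        have : ((r : ℤ) : ℚ) ≤ -2 := by exact_mod_cast hr
        linarith
      · exact ⟨ne_of_lt hx0, ih.2⟩

lemma key : ∀ (l : List ℤ) (hne : l ≠ []), (∀ r ∈ l, r ≤ -2) →
    ∀ p q : ℤ, 0 < q → q < p → Int.gcd p q = 1 → ncf l = -(p:ℚ)/(q:ℚ) →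
    ∃ p' q' : ℤ, BezoutNext p q p' q' ∧
      ncf (l.dropLast ++ [l.getLast hne + 1]) = -(p':ℚ)/(q':ℚ)
  | [r], _, h, p, q, hq, hqp, hco, hval => by
      have hq0 : (q : ℚ) ≠ 0 := by exact_mod_cast hq.ne'
      have hrq : r * q = -p := by
        have : ((r : ℤ) : ℚ) = -(p:ℚ)/(q:ℚ) := hval
        field_simp at this
        exact_mod_cast this
      have hdq : q ∣ p := ⟨-r, by linarith⟩
      have hq1 : q = 1 := by
        have h1 := Int.dvd_coe_gcd hdq dvd_rfl
        rw [hco] at h1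
        exact Int.eq_one_of_dvd_one hq.le (by exact_mod_cast h1)
      have hpr : p = -r := by rw [hq1] at hrq; linarith
      refine ⟨p - 1, 1, ⟨by rw [hq1]; ring, by omega, by omega, by omega, by omega⟩, ?_⟩
      show ((r + 1 : ℤ) : ℚ) = -((p - 1 : ℤ) : ℚ) / ((1 : ℤ) : ℚ)
      push_cast
      rw [hpr]; push_cast; ring
  | r :: s :: t, _, h, p, q, hq, hqp, hco, hval => by
      have hmem : ∀ x ∈ (s :: t : List ℤ), x ≤ -2 :=
        fun x hx => h x (List.mem_cons_of_mem _ hx)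
      have hr : r ≤ -2 := h r (by simp)
      set x := ncf (s :: t) with hxdef
      have hxlt : x < -1 := ncf_lt_neg_one (s :: t) (by simp) hmem
      have hx0 : x < 0 := by linarith
      set a : ℤ := -x.num with ha
      set b : ℤ := (x.den : ℤ) with hbdef
      have hb0 : 0 < b := by rw [hbdef]; exact_mod_cast x.pos
      have hba : b < a := by
        have h1 : (x.num : ℚ) < -1 * (x.den : ℚ) := by
          rw [← div_lt_iff₀ (by exact_mod_cast x.pos : (0:ℚ) < (x.den : ℚ)),
            Rat.num_div_den]
          exact hxlt
        have h2 : (x.num : ℚ) < -(x.den : ℚ) := by linarith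
        have : x.num < -(x.den : ℤ) := by exact_mod_cast h2
        omega
      have ha0 : 0 < a := lt_trans hb0 hba
      have hgab : Int.gcd a b = 1 := by
        simpa [ha, hbdef, Int.gcd, Int.natAbs_neg] using x.reduced
      have hxab : x = -(a:ℚ)/(b:ℚ) := by
        rw [ha, hbdef]; push_cast; rw [neg_neg, Rat.num_div_den]
      have hq0 : (q : ℚ) ≠ 0 := by exact_mod_cast hq.ne'
      have ha0' : (a : ℚ) ≠ 0 := by exact_mod_cast ha0.ne'
      have hb0' : (b : ℚ) ≠ 0 := by exact_mod_cast hb0.ne'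
      have hval' : (r:ℚ) - 1/(-(a:ℚ)/(b:ℚ)) = -(p:ℚ)/(q:ℚ) := by
        rw [← hxab, ← ncf_cons r (s :: t) (by simp)]; exact hval
      have hcross : (r*a + b) * q = -p * a := by
        rw [div_div_eq_mul_div, one_mul, neg_div, div_neg, sub_neg_eq_add] at hval'
        have h9 : ((r:ℚ)*a + b)*q = -(p:ℚ)*a := by
          field_simp at hval'
          linear_combination hval'
        exact_mod_cast h9
      have hdvd1 : a ∣ b * q := ⟨-p - r*q, by linear_combination hcross⟩
      have haq' : a ∣ q :=
        ((Int.isCoprime_iff_gcd_eq_one.mpr hgab)).dvd_of_dvd_mul_left hdvd1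
      have hdvd2 : q ∣ p * a := ⟨-(r*a+b), by linear_combination hcross⟩
      have hqa' : q ∣ a :=
        ((Int.isCoprime_iff_gcd_eq_one.mpr hco).symm).dvd_of_dvd_mul_left hdvd2
      have haq : a = q := Int.dvd_antisymm ha0.le hq.le haq' hqa'
      have hbval : p = -r*q - b := by
        have h2 : (r*q + b) * q = -p * q := by rw [← haq] at hcross ⊢; exact hcross
        have h3 : r*q + b = -p := mul_right_cancel₀ hq.ne' h2
        linarith
      obtain ⟨a', b', hB, hval2⟩ := key (s :: t) (by simp) hmem q b hb0
        (haq ▸ hba) (haq ▸ hgab) (by rw [hxdef] at hxab; rw [hxab, haq])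
      obtain ⟨hB1, hB2, hB3, hB4, hB5⟩ := hB
      have hb'a' : b' ≤ a' := by nlinarith
      refine ⟨-(r*a' + b'), a', ⟨?_, ?_, ?_, hB2, hB3.le⟩, ?_⟩
      · linear_combination a' * hbval + hB1
      · nlinarith [mul_nonneg (by linarith : (0:ℤ) ≤ -r-2) hB2.le]
      · nlinarith
      · have hlist : ((r :: s :: t : List ℤ).dropLast ++
            [(r :: s :: t : List ℤ).getLast (by simp) + 1]) =
            r :: ((s :: t : List ℤ).dropLast ++
              [(s :: t : List ℤ).getLast (by simp) + 1]) := by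
          simp [List.getLast_cons]
        rw [hlist, ncf_cons r _ (by simp), hval2]
        have ha'0 : ((a' : ℤ) : ℚ) ≠ 0 := by exact_mod_cast hB2.ne'
        have hb'0 : ((b' : ℤ) : ℚ) ≠ 0 := by exact_mod_cast hB4.ne'
        rw [div_div_eq_mul_div, one_mul, neg_div, div_neg, sub_neg_eq_add]
        push_cast
        field_simp

theorem stmt4 (p q : ℤ) (hq : 0 < q) (hqp : q < p) (hco : Int.gcd p q = 1)
    (l : List ℤ) (hne : l ≠ []) (hl : ∀ r ∈ l, r ≤ -2)
    (hwf : NcfWF l) (hval : ncf l = -(p : ℚ) / (q : ℚ))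
    (p' q' : ℤ) (hb : BezoutNext p q p' q') :
    NcfWF (l.dropLast ++ [l.getLast hne + 1]) ∧
    ncf (l.dropLast ++ [l.getLast hne + 1]) = -(p' : ℚ) / (q' : ℚ) := by
  have hwf' : NcfWF (l.dropLast ++ [l.getLast hne + 1]) := by
    have hne' : l.dropLast ++ [l.getLast hne + 1] ≠ [] := by simp
    refine (ncf_wf_le _ hne' ?_ ?_).2
    · intro r hr
      rw [List.dropLast_concat] at hr
      exact hl r (List.dropLast_subset l hr)
    · rw [List.getLast_concat]
      have := hl _ (List.getLast_mem hne)
      omega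
  obtain ⟨p'', q'', hB2, hv⟩ := key l hne hl p q hq hqp hco hval
  obtain ⟨e1, e2, e3, e4, e5⟩ := hb
  obtain ⟨f1, f2, f3, f4, f5⟩ := hB2
  have hdvd : p ∣ q * (p' - p'') := ⟨q' - q'', by linear_combination f1 - e1⟩
  have hdp : p ∣ (p' - p'') :=
    ((Int.isCoprime_iff_gcd_eq_one.mpr hco)).dvd_of_dvd_mul_left hdvd
  obtain ⟨c, hc⟩ := hdp
  have hp0 : 0 < p := lt_trans hq hqp
  have hc1 : c < 1 := by
    have : p * c < p * 1 := by rw [mul_one]; linarith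
    exact lt_of_mul_lt_mul_left this hp0.le
  have hc2 : -1 < c := by
    have : p * (-1) < p * c := by rw [mul_neg_one]; linarith
    exact lt_of_mul_lt_mul_left this hp0.le
  have hc0 : c = 0 := by omega
  have hpp : p' = p'' := by rw [hc0, mul_zero] at hc; omega
  have hqq : q' = q'' := by
    have : p * q' = p * q'' := by rw [hpp] at e1; linarith
    exact mul_left_cancel₀ hp0.ne' this
  rw [hpp, hqq]
  exact ⟨hwf', hv⟩
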